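/- Let E be a real locally convex topological vector space, let C be a convex subset of the topological dual E′ that is closed in the weak-* topology, and let A : E → E be a continuous linear map. Then the adjoint A′(λ) = λ ∘ A maps C into C if and only if s_C(A v) ≤ s_C(v) for every v ∈ E (the inequality taken in [−∞, ∞]). -/

import Mathlib

open Topology

/-- Every continuous linear functional on the weak-* dual is evaluation at a point. -/
lemma WeakDual.exists_eval {E : Type*} [AddCommGroup E] [Module ℝ E]
    [TopologicalSpace E] (f : WeakDual ℝ E →L[ℝ] ℝ) :
    ∃ v : E, ∀ lam : WeakDual ℝ E, f lam = lam v := by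
  set B := topDualPairing ℝ E with hB
  -- continuity at 0 gives a seminorm-ball neighborhood
  have h0 : f ⁻¹' Metric.ball (0 : ℝ) 1 ∈ 𝓝 (0 : WeakDual ℝ E) := by
    have := f.continuous.continuousAt (x := (0 : WeakDual ℝ E))
    have h1 : Metric.ball (0 : ℝ) 1 ∈ 𝓝 (f 0) := by
      rw [map_zero]; exact Metric.ball_mem_nhds 0 one_pos
    exact this h1
  obtain ⟨⟨s, r⟩, hr, hball⟩ :=
    ((B.weakBilin_withSeminorms).hasBasis_zero_ball).mem_iff.mp h0
  -- kernel containment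
  have hker : ⨅ i : s, LinearMap.ker (B.flip (i : E)) ≤ LinearMap.ker (f : WeakDual ℝ E →ₗ[ℝ] ℝ) := by
    intro lam hlam
    simp only [Submodule.mem_iInf, LinearMap.mem_ker] at hlam ⊢
    have hz : ∀ t : ℝ, |t| * |f lam| < 1 := by
      intro t
      have hmem : (t • lam : WeakDual ℝ E) ∈ (s.sup B.toSeminormFamily).ball 0 r := by
        rw [Seminorm.mem_ball_zero]
        have : (s.sup B.toSeminormFamily) (t • lam) = 0 := by
          have h1 : (s.sup B.toSeminormFamily) lam = 0 := by
            apply le_antisymm _ (apply_nonneg _ _)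
            apply Seminorm.finset_sup_apply_le le_rfl
            intro i hi
            have := hlam ⟨i, hi⟩
            simp only [LinearMap.toSeminormFamily_apply]
            rw [show (B lam) i = (B.flip i) lam from rfl, this, norm_zero]
          rw [map_smul_eq_mul, h1, mul_zero]
        rw [this]; exact hr
      have : f (t • lam) ∈ Metric.ball (0 : ℝ) 1 := hball hmem
      have hsm : f (t • lam) = t * f lam := f.map_smul t lam
      simpa [hsm, Set.mem_preimage, Metric.mem_ball, Real.dist_eq, map_smul, abs_mul] using this
    by_contra hne
    have hpos : 0 < |f lam| := abs_pos.mpr hne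
    have := hz (2 / |f lam|)
    rw [abs_div, abs_two, abs_abs, div_mul_cancel₀ 2 (ne_of_gt hpos)] at this
    norm_num at this
  have hspan := mem_span_of_iInf_ker_le_ker (L := fun i : s => B.flip (i : E))
    (K := (f : WeakDual ℝ E →ₗ[ℝ] ℝ)) hker
  have hrange : (f : WeakDual ℝ E →ₗ[ℝ] ℝ) ∈ LinearMap.range B.flip := by
    have hsub : Submodule.span ℝ (Set.range fun i : s => B.flip (i : E)) ≤ LinearMap.range B.flip := by
      rw [Submodule.span_le]
      rintro _ ⟨i, rfl⟩
      exact LinearMap.mem_range_self _ _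
    exact hsub hspan
  obtain ⟨v, hv⟩ := hrange
  exact ⟨v, fun lam => (LinearMap.congr_fun hv lam).symm⟩

/-- The support functional `s_C : E → [-∞,∞]` of a set `C` of continuous linear
functionals, `s_C(x) = sup_{α ∈ C} α(x)`. -/
noncomputable def supportFunctional {E : Type*} [AddCommGroup E] [Module ℝ E]
    [TopologicalSpace E] (C : Set (WeakDual ℝ E)) (x : E) : EReal :=
  sSup ((fun α : WeakDual ℝ E => (α x : EReal)) '' C)

/-- For a weak-*-closed convex subset `C ⊆ E'` and a continuous linear map `A : E → E`,
the adjoint `A'(λ) = λ ∘ A` maps `C` into `C` if and only if `s_C(A v) ≤ s_C(v)` for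
every `v ∈ E`. -/
theorem adjoint_maps_into_iff_support_le
    {E : Type*} [AddCommGroup E] [Module ℝ E] [TopologicalSpace E]
    [IsTopologicalAddGroup E] [ContinuousSMul ℝ E] [LocallyConvexSpace ℝ E]
    (C : Set (WeakDual ℝ E)) (hCconv : Convex ℝ C) (hCclosed : IsClosed C)
    (A : E →L[ℝ] E) :
    (∀ lam ∈ C, (ContinuousLinearMap.comp lam A : WeakDual ℝ E) ∈ C) ↔
      ∀ v : E, supportFunctional C (A v) ≤ supportFunctional C v := by
  constructor
  · intro h v
    apply sSup_le
    rintro x ⟨α, hα, rfl⟩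
    exact le_sSup ⟨(ContinuousLinearMap.comp α A : WeakDual ℝ E), h α hα, rfl⟩
  · intro h lam hlam
    by_contra hniC
    haveI : LocallyConvexSpace ℝ (WeakDual ℝ E) := WeakBilin.locallyConvexSpace
    obtain ⟨f, u, hfu, hux⟩ := geometric_hahn_banach_closed_point hCconv hCclosed hniC
    obtain ⟨v, hv⟩ := WeakDual.exists_eval f
    have h1 : supportFunctional C v ≤ (u : EReal) := by
      apply sSup_le
      rintro x ⟨α, hα, rfl⟩
      show ((α v : ℝ) : EReal) ≤ (u : EReal)
      exact_mod_cast (hv α ▸ hfu α hα).le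
    have h2 : (lam (A v) : EReal) ≤ supportFunctional C (A v) :=
      le_sSup ⟨lam, hlam, rfl⟩
    have h3 : (u : EReal) < (lam (A v) : EReal) := by
      have heq : f (ContinuousLinearMap.comp lam A : WeakDual ℝ E) = lam (A v) :=
        hv (ContinuousLinearMap.comp lam A : WeakDual ℝ E)
      exact_mod_cast heq ▸ hux
    exact absurd ((h3.trans_le h2).trans_le ((h v).trans h1)) (lt_irrefl _)
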